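/- The IPCW estimators of the survival and distribution functions are complementary exactly when all last observations are failures: S̃_IPCW(t) = 1 − F̂_IPCW(t) holds for every t ≥ 0 if and only if ΔN(τ) = Y(τ). -/

import Mathlib

open Finset
open scoped Classical

noncomputable section

namespace SurvStmt

/-- The finite set of distinct observed times `{X_1, …, X_n}`. -/
def times {n : ℕ} (X : Fin n → ℝ) : Finset ℝ := Finset.image X Finset.univ

/-- `Y(t) = #{i : X_i ≥ t}`, as a real number. -/
def Yat {n : ℕ} (X : Fin n → ℝ) (t : ℝ) : ℝ :=
  ((Finset.univ.filter (fun i => t ≤ X i)).card : ℝ)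

/-- `Y(t+) = #{i : X_i > t}`, as a real number. -/
def Yplus {n : ℕ} (X : Fin n → ℝ) (t : ℝ) : ℝ :=
  ((Finset.univ.filter (fun i => t < X i)).card : ℝ)

/-- `ΔN(t) = #{i : X_i = t, D_i = 1}`, as a real number. -/
def dN {n : ℕ} (X : Fin n → ℝ) (D : Fin n → Bool) (t : ℝ) : ℝ :=
  ((Finset.univ.filter (fun i => X i = t ∧ D i = true)).card : ℝ)

/-- `ΔC(t) = #{i : X_i = t, D_i = 0}`, as a real number. -/
def dC {n : ℕ} (X : Fin n → ℝ) (D : Fin n → Bool) (t : ℝ) : ℝ :=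
  ((Finset.univ.filter (fun i => X i = t ∧ D i = false)).card : ℝ)

/-- `Y†(t) = Y(t) − ΔN(t)`. -/
def Ydag {n : ℕ} (X : Fin n → ℝ) (D : Fin n → Bool) (t : ℝ) : ℝ :=
  Yat X t - dN X D t

/-- `τ = max_i X_i`, the largest observation time (0 if there is no data). -/
def tau {n : ℕ} (X : Fin n → ℝ) : ℝ := ((times X).max).unbotD 0

/-- Censoring product-limit estimator `K̂(t) = ∏_{u ≤ t} (1 − ΔC(u)/Y†(u))`. -/
def Khat {n : ℕ} (X : Fin n → ℝ) (D : Fin n → Bool) (t : ℝ) : ℝ :=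
  ∏ u ∈ (times X).filter (fun u => u ≤ t), (1 - dC X D u / Ydag X D u)

/-- Left limit `K̂(t−) = ∏_{u < t} (1 − ΔC(u)/Y†(u))`. -/
def Kminus {n : ℕ} (X : Fin n → ℝ) (D : Fin n → Bool) (t : ℝ) : ℝ :=
  ∏ u ∈ (times X).filter (fun u => u < t), (1 - dC X D u / Ydag X D u)

/-- Failure product-limit estimator `Ŝ_PL(t) = ∏_{u ≤ t} (1 − ΔN(u)/Y(u))`. -/
def SPL {n : ℕ} (X : Fin n → ℝ) (D : Fin n → Bool) (t : ℝ) : ℝ :=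
  ∏ u ∈ (times X).filter (fun u => u ≤ t), (1 - dN X D u / Yat X u)

/-- Left limit `Ŝ_PL(t−) = ∏_{u < t} (1 − ΔN(u)/Y(u))`. -/
def SPLminus {n : ℕ} (X : Fin n → ℝ) (D : Fin n → Bool) (t : ℝ) : ℝ :=
  ∏ u ∈ (times X).filter (fun u => u < t), (1 - dN X D u / Yat X u)

/-- IPCW estimator `F̂_IPCW(t) = (1/n) ∑_i D_i 1{X_i ≤ t} / K̂(X_i−)`. -/
def FIPCW {n : ℕ} (X : Fin n → ℝ) (D : Fin n → Bool) (t : ℝ) : ℝ :=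
  (1 / (n : ℝ)) * ∑ i : Fin n,
    (if D i = true then (1 : ℝ) else 0) * (if X i ≤ t then (1 : ℝ) else 0) / Kminus X D (X i)

/-- IPCW survival estimator `S̃_IPCW(t) = (1/n) ∑_i D_i 1{X_i > t} / K̂(X_i−)`. -/
def SIPCW {n : ℕ} (X : Fin n → ℝ) (D : Fin n → Bool) (t : ℝ) : ℝ :=
  (1 / (n : ℝ)) * ∑ i : Fin n,
    (if D i = true then (1 : ℝ) else 0) * (if t < X i then (1 : ℝ) else 0) / Kminus X D (X i)

/-- RTTR jump weight `J(v) = 1/(n · K̂(v−))`. -/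
def Jw {n : ℕ} (X : Fin n → ℝ) (D : Fin n → Bool) (v : ℝ) : ℝ :=
  1 / ((n : ℝ) * Kminus X D v)

/-- Redistribute-to-the-right estimator
`Ŝ_RTTR(t) = 1 − ∑_{v ≤ t} [J(v) ΔN(v) 1{v < τ} + J(τ) Y(τ) 1{v = τ}]`. -/
def SRTTR {n : ℕ} (X : Fin n → ℝ) (D : Fin n → Bool) (t : ℝ) : ℝ :=
  1 - ∑ v ∈ (times X).filter (fun v => v ≤ t),
      (Jw X D v * dN X D v * (if v < tau X then (1 : ℝ) else 0)
        + Jw X D (tau X) * Yat X (tau X) * (if v = tau X then (1 : ℝ) else 0))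

variable {n : ℕ} {X : Fin n → ℝ} {D : Fin n → Bool}

lemma mem_times {v : ℝ} : v ∈ times X ↔ ∃ i, X i = v := by
  simp [times]

lemma Yat_pos {v : ℝ} (hv : v ∈ times X) : 0 < Yat X v := by
  obtain ⟨i, hi⟩ := mem_times.1 hv
  have : i ∈ Finset.univ.filter (fun i => v ≤ X i) := by simp [hi.ge]
  unfold Yat
  exact_mod_cast Finset.card_pos.2 ⟨i, this⟩

lemma Yplus_pos {v : ℝ} (h : ∃ i, v < X i) : 0 < Yplus X v := by
  obtain ⟨i, hi⟩ := h
  have : i ∈ Finset.univ.filter (fun i => v < X i) := by simp [hi]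
  unfold Yplus
  exact_mod_cast Finset.card_pos.2 ⟨i, this⟩

lemma dC_nonneg (v : ℝ) : 0 ≤ dC X D v := by unfold dC; positivity

lemma count_split (D : Fin n → Bool) (v : ℝ) :
    Yat X v = Yplus X v + dN X D v + dC X D v := by
  unfold Yat Yplus dN dC
  have e1 : (Finset.univ.filter (fun i => v ≤ X i))
      = (Finset.univ.filter (fun i => v < X i)) ∪ (Finset.univ.filter (fun i : Fin n => X i = v)) := by
    ext i
    simp only [Finset.mem_union, Finset.mem_filter, Finset.mem_univ, true_and]
    constructor
    · intro h; rcases lt_or_eq_of_le h with h | h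
      · exact Or.inl h
      · exact Or.inr h.symm
    · rintro (h | h); exacts [le_of_lt h, h.ge]
  have d1 : Disjoint (Finset.univ.filter (fun i => v < X i))
      (Finset.univ.filter (fun i : Fin n => X i = v)) := by
    rw [Finset.disjoint_left]
    intro i h1 h2
    simp only [Finset.mem_filter, Finset.mem_univ, true_and] at h1 h2
    exact h1.ne' h2
  have e2 : ((Finset.univ.filter (fun i : Fin n => X i = v)).filter (fun i => D i = true)).card
      + ((Finset.univ.filter (fun i : Fin n => X i = v)).filter (fun i => ¬ (D i = true))).card
      = (Finset.univ.filter (fun i : Fin n => X i = v)).card :=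
    Finset.card_filter_add_card_filter_not _
  rw [Finset.filter_filter, Finset.filter_filter] at e2
  simp only [Bool.not_eq_true] at e2
  rw [e1, Finset.card_union_of_disjoint d1]
  push_cast [← e2]
  ring

lemma Ydag_eq (v : ℝ) : Ydag X D v = Yplus X v + dC X D v := by
  unfold Ydag
  have := count_split (X := X) D v
  linarith

/-- telescoping sum lemma -/
lemma tele_sum (a : ℝ → ℝ) (T : Finset ℝ) (hT : T.Nonempty) :
    ∑ u ∈ T, ((∏ v ∈ T.filter (fun v => v < u), a v) - ∏ v ∈ T.filter (fun v => v ≤ u), a v)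
      = 1 - ∏ v ∈ T, a v := by
  induction T using Finset.strongInduction with
  | _ T ih =>
    set m := T.max' hT with hm
    have hmT : m ∈ T := T.max'_mem hT
    set T' := T.erase m with hT'
    have hins : T = insert m T' := by rw [hT', Finset.insert_erase hmT]
    have hmnot : m ∉ T' := Finset.notMem_erase _ _
    have hlt : ∀ u ∈ T', u < m := fun u hu =>
      lt_of_le_of_ne (T.le_max' u (Finset.mem_of_mem_erase hu)) (Finset.ne_of_mem_erase hu)
    have hfilt : ∀ u ∈ T', (T.filter (fun v => v < u) = T'.filter (fun v => v < u))
        ∧ (T.filter (fun v => v ≤ u) = T'.filter (fun v => v ≤ u)) := by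
      intro u hu
      constructor
      · rw [hins, Finset.filter_insert, if_neg (not_lt.2 (hlt u hu).le)]
      · rw [hins, Finset.filter_insert, if_neg (not_le.2 (hlt u hu))]
    have hfm1 : T.filter (fun v => v < m) = T' := by
      rw [hins, Finset.filter_insert, if_neg (lt_irrefl m)]
      apply Finset.filter_true_of_mem
      intro u hu; exact hlt u hu
    have hfm2 : T.filter (fun v => v ≤ m) = T := by
      apply Finset.filter_true_of_mem
      intro u hu; exact T.le_max' u hu
    rw [hins, Finset.sum_insert hmnot, ← hins, hfm1, hfm2]
    by_cases hT'e : T' = ∅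
    · simp [hT'e, hins]
    · have hT'ne : T'.Nonempty := Finset.nonempty_of_ne_empty hT'e
      have hsub : T' ⊂ T := by
        rw [hins]; exact Finset.ssubset_insert hmnot
      have := ih T' hsub hT'ne
      have hcongr : ∑ u ∈ T', ((∏ v ∈ T.filter (fun v => v < u), a v)
            - ∏ v ∈ T.filter (fun v => v ≤ u), a v)
          = ∑ u ∈ T', ((∏ v ∈ T'.filter (fun v => v < u), a v)
            - ∏ v ∈ T'.filter (fun v => v ≤ u), a v) := by
        apply Finset.sum_congr rfl
        intro u hu
        rw [(hfilt u hu).1, (hfilt u hu).2]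
      rw [hcongr, this, hins, Finset.prod_insert hmnot]
      ring

/-- telescoping product: for u ∈ times X, ∏_{v<u} Yplus/Yat = Yat u / n -/
lemma prodY (hn : 0 < n) : ∀ (k : ℕ) (u : ℝ), u ∈ times X →
    ((times X).filter (fun v => v < u)).card = k →
    ∏ v ∈ (times X).filter (fun v => v < u), (Yplus X v / Yat X v) = Yat X u / n := by
  intro k
  induction k using Nat.strong_induction_on with
  | _ k ih =>
    intro u hu hcard
    set S := (times X).filter (fun v => v < u) with hS
    by_cases hSe : S = ∅
    · have hall : ∀ i, u ≤ X i := by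
        intro i
        by_contra h
        push_neg at h
        have : X i ∈ S := by
          rw [hS, Finset.mem_filter]
          exact ⟨mem_times.2 ⟨i, rfl⟩, h⟩
        rw [hSe] at this; exact absurd this (Finset.notMem_empty _)
      have hY : Yat X u = n := by
        unfold Yat
        rw [Finset.filter_true_of_mem (fun i _ => hall i)]
        simp
      rw [hSe, hY]
      simp [Finset.prod_empty, div_self (by exact_mod_cast hn.ne' : (n:ℝ) ≠ 0)]
    · have hSne : S.Nonempty := Finset.nonempty_of_ne_empty hSe
      set m := S.max' hSne with hm
      have hmS : m ∈ S := S.max'_mem hSne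
      have hmT : m ∈ times X := (Finset.mem_filter.1 hmS).1
      have hmu : m < u := (Finset.mem_filter.1 hmS).2
      have hSm : S = insert m ((times X).filter (fun v => v < m)) := by
        ext v
        simp only [Finset.mem_insert, hS, Finset.mem_filter]
        constructor
        · intro hv
          rcases eq_or_lt_of_le (S.le_max' v (by rw [hS, Finset.mem_filter]; exact hv)) with h | h
          · exact Or.inl h
          · exact Or.inr ⟨hv.1, h⟩
        · rintro (rfl | ⟨hv1, hv2⟩)
          · exact ⟨hmT, hmu⟩
          · exact ⟨hv1, hv2.trans hmu⟩
      have hmnot : m ∉ (times X).filter (fun v => v < m) := by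
        simp [Finset.mem_filter]
      have hcard' : ((times X).filter (fun v => v < m)).card < k := by
        rw [← hcard, hSm, Finset.card_insert_of_notMem hmnot]
        omega
      have hIH := ih _ hcard' m hmT rfl
      have hYplus : Yplus X m = Yat X u := by
        unfold Yplus Yat
        congr 1
        congr 1
        ext i
        simp only [Finset.mem_filter, Finset.mem_univ, true_and]
        constructor
        · intro h
          by_contra h2
          push_neg at h2
          have hXi : X i ∈ S := by
            rw [hS, Finset.mem_filter]
            exact ⟨mem_times.2 ⟨i, rfl⟩, h2⟩
          exact absurd (S.le_max' _ hXi) (not_le.2 h)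
        · intro h; exact lt_of_lt_of_le hmu h
      have hYm : Yat X m ≠ 0 := (Yat_pos hmT).ne'
      rw [hSm, Finset.prod_insert hmnot, hIH, hYplus]
      field_simp

lemma key (hn : 0 < n) {u : ℝ} (hu : u ∈ times X) :
    Kminus X D u * SPLminus X D u = Yat X u / n := by
  unfold Kminus SPLminus
  rw [← Finset.prod_mul_distrib]
  have hcongr : ∀ v ∈ (times X).filter (fun v => v < u),
      (1 - dC X D v / Ydag X D v) * (1 - dN X D v / Yat X v) = Yplus X v / Yat X v := by
    intro v hv
    rw [Finset.mem_filter] at hv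
    obtain ⟨i, hi⟩ := mem_times.1 hu
    have hp : 0 < Yplus X v := Yplus_pos ⟨i, by rw [hi]; exact hv.2⟩
    have hY : Yat X v ≠ 0 := (Yat_pos hv.1).ne'
    have hd : Ydag X D v ≠ 0 := by
      rw [Ydag_eq]
      have := dC_nonneg (X := X) (D := D) v
      positivity
    have hde := Ydag_eq (X := X) (D := D) v
    have e1 : 1 - dC X D v / Ydag X D v = Yplus X v / Ydag X D v := by
      rw [eq_div_iff hd, sub_mul, div_mul_cancel₀ _ hd, hde]; ring
    have e2 : 1 - dN X D v / Yat X v = Ydag X D v / Yat X v := by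
      rw [eq_div_iff hY, sub_mul, div_mul_cancel₀ _ hY]; unfold Ydag; ring
    rw [e1, e2]
    field_simp
  rw [Finset.prod_congr rfl hcongr]
  exact prodY hn _ u hu rfl

lemma SPL_eq {u : ℝ} (hu : u ∈ times X) :
    SPL X D u = (1 - dN X D u / Yat X u) * SPLminus X D u := by
  unfold SPL SPLminus
  have hins : (times X).filter (fun v => v ≤ u) = insert u ((times X).filter (fun v => v < u)) := by
    ext v
    simp only [Finset.mem_insert, Finset.mem_filter]
    constructor
    · rintro ⟨hv1, hv2⟩
      rcases eq_or_lt_of_le hv2 with h | h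
      · exact Or.inl h
      · exact Or.inr ⟨hv1, h⟩
    · rintro (rfl | ⟨hv1, hv2⟩)
      · exact ⟨hu, le_rfl⟩
      · exact ⟨hv1, hv2.le⟩
  rw [hins, Finset.prod_insert (by simp)]

lemma sum_group :
    ∑ i : Fin n, (if D i = true then (1:ℝ) else 0) / Kminus X D (X i)
      = ∑ u ∈ times X, dN X D u / Kminus X D u := by
  rw [← Finset.sum_fiberwise_of_maps_to (g := X) (t := times X)
    (fun i _ => mem_times.2 ⟨i, rfl⟩)]
  apply Finset.sum_congr rfl
  intro u hu
  have : ∀ i ∈ Finset.univ.filter (fun i => X i = u),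
      (if D i = true then (1:ℝ) else 0) / Kminus X D (X i)
        = (if D i = true then (1:ℝ) else 0) / Kminus X D u := by
    intro i hi
    rw [(Finset.mem_filter.1 hi).2]
  rw [Finset.sum_congr rfl this, ← Finset.sum_div, Finset.sum_boole, Finset.filter_filter]
  unfold dN
  norm_num

/-- `S̃_IPCW(t) = 1 − F̂_IPCW(t)` for every `t ≥ 0` iff `ΔN(τ) = Y(τ)`. -/
theorem stmt13 (n : ℕ) (hn : 0 < n) (X : Fin n → ℝ) (D : Fin n → Bool)
    (hX : ∀ i, 0 < X i) :
    (∀ t : ℝ, 0 ≤ t → SIPCW X D t = 1 - FIPCW X D t)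
      ↔ dN X D (tau X) = Yat X (tau X) := by
  have hTne : (times X).Nonempty := ⟨X ⟨0, hn⟩, mem_times.2 ⟨⟨0, hn⟩, rfl⟩⟩
  have htau : tau X = (times X).max' hTne := by
    unfold tau
    rw [← Finset.coe_max' hTne]
    rfl
  have hτT : tau X ∈ times X := htau ▸ (times X).max'_mem hTne
  have hn' : (n : ℝ) ≠ 0 := by exact_mod_cast hn.ne'
  have hKne : ∀ u ∈ times X, Kminus X D u ≠ 0 := by
    intro u hu
    have h := key (D := D) hn hu
    intro h0
    rw [h0, zero_mul] at h
    exact (div_ne_zero (Yat_pos hu).ne' hn') h.symm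
  have hSne : ∀ u ∈ times X, SPLminus X D u ≠ 0 := by
    intro u hu
    have h := key (D := D) hn hu
    intro h0
    rw [h0, mul_zero] at h
    exact (div_ne_zero (Yat_pos hu).ne' hn') h.symm
  have hterm : ∀ u ∈ times X,
      (1 / (n:ℝ)) * (dN X D u / Kminus X D u) = SPLminus X D u - SPL X D u := by
    intro u hu
    have hY := (Yat_pos hu).ne'
    have hK := hKne u hu
    have hS := hSne u hu
    have hks := key (D := D) hn hu
    have hnK : (n:ℝ) * (Kminus X D u * SPLminus X D u) = Yat X u := by
      rw [hks]; field_simp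
    rw [SPL_eq hu]
    field_simp
    linear_combination (-dN X D u) * hnK
  have hCsum : ∀ t : ℝ, SIPCW X D t + FIPCW X D t = 1 - SPL X D (tau X) := by
    intro t
    unfold SIPCW FIPCW
    rw [← mul_add, ← Finset.sum_add_distrib]
    have hind : ∀ i : Fin n,
        (if D i = true then (1:ℝ) else 0) * (if t < X i then (1:ℝ) else 0) / Kminus X D (X i)
        + (if D i = true then (1:ℝ) else 0) * (if X i ≤ t then (1:ℝ) else 0) / Kminus X D (X i)
        = (if D i = true then (1:ℝ) else 0) / Kminus X D (X i) := by
      intro i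
      rw [← add_div]
      rcases le_or_gt (X i) t with h | h
      · rw [if_pos h, if_neg (not_lt.2 h)]; ring_nf
      · rw [if_neg (not_le.2 h), if_pos h]; ring_nf
    rw [Finset.sum_congr rfl (fun i _ => hind i), sum_group, Finset.mul_sum,
      Finset.sum_congr rfl hterm]
    have htele : ∑ u ∈ times X, (SPLminus X D u - SPL X D u)
        = 1 - ∏ v ∈ times X, (1 - dN X D v / Yat X v) :=
      tele_sum (fun v => 1 - dN X D v / Yat X v) (times X) hTne
    rw [htele]
    have : SPL X D (tau X) = ∏ v ∈ times X, (1 - dN X D v / Yat X v) := by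
      unfold SPL
      rw [Finset.filter_true_of_mem]
      intro v hv
      rw [htau]
      exact (times X).le_max' v hv
    rw [this]
  have hYτ := (Yat_pos hτT).ne'
  constructor
  · intro h
    have h0 := h 0 le_rfl
    have hc := hCsum 0
    have hSPL0 : SPL X D (tau X) = 0 := by linarith
    rw [SPL_eq hτT] at hSPL0
    rcases mul_eq_zero.1 hSPL0 with h1 | h1
    · have : dN X D (tau X) / Yat X (tau X) = 1 := by linarith
      rw [div_eq_one_iff_eq hYτ] at this
      exact this
    · exact absurd h1 (hSne _ hτT)
  · intro h t ht
    have hSPL0 : SPL X D (tau X) = 0 := by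
      rw [SPL_eq hτT, h, div_self hYτ]
      simp
    have hc := hCsum t
    rw [hSPL0] at hc
    linarith

end SurvStmt
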